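/- Let Λ be a k-graph with a self-similar action of a group G. Then the following two subsets of Λ^∞ × (Q(ℕ^k,G) ⋊_T ℤ^k) × Λ^∞ are equal: (A) the set of all triples (x; [f], p−q; y), where x, y ∈ Λ^∞, f ∈ C(ℕ^k,G) and p, q ∈ ℕ^k satisfy σ^p(x) = f(p)·σ^q(y) and f(p+n) = f(p)|_{σ^q(y)(0,n)} for all n ∈ ℕ^k; and (B) the set {(μ(g·x); T_{d(μ)}([g|_x]), d(μ)−d(ν); νx) : g ∈ G, μ, ν ∈ Λ with s(μ) = g·s(ν), x ∈ s(ν)Λ^∞}. -/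

import Mathlib

namespace SSKG

/-- `ℕ^k`. -/
abbrev NK (k : ℕ) := Fin k → ℕ
/-- `ℤ^k`. -/
abbrev ZK (k : ℕ) := Fin k → ℤ

lemma le0 {k : ℕ} (p : NK k) : 0 ≤ p := Pi.le_def.mpr fun i => Nat.zero_le (p i)

/-- A (row-finite, source-free, countable) `k`-graph: a countable small category with a
degree functor `d` into `ℕ^k` satisfying the unique factorization property. -/
structure KGraph (k : ℕ) where
  Obj : Type
  Mor : Type
  countable_mor : Countable Mor
  r : Mor → Obj
  s : Mor → Obj
  d : Mor → NK k
  ofObj : Obj → Mor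
  comp : (μ ν : Mor) → s μ = r ν → Mor
  r_ofObj : ∀ v, r (ofObj v) = v
  s_ofObj : ∀ v, s (ofObj v) = v
  d_ofObj : ∀ v, d (ofObj v) = 0
  eq_ofObj_of_d_eq_zero : ∀ μ, d μ = 0 → ∃ v, μ = ofObj v
  r_comp : ∀ μ ν h, r (comp μ ν h) = r μ
  s_comp : ∀ μ ν h, s (comp μ ν h) = s ν
  d_comp : ∀ μ ν h, d (comp μ ν h) = d μ + d ν
  comp_ofObj : ∀ μ (h : s μ = r (ofObj (s μ))), comp μ (ofObj (s μ)) h = μ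
  ofObj_comp : ∀ μ (h : s (ofObj (r μ)) = r μ), comp (ofObj (r μ)) μ h = μ
  comp_assoc : ∀ μ ν ρ (h₁ : s μ = r ν) (h₂ : s ν = r ρ),
      comp (comp μ ν h₁) ρ ((s_comp μ ν h₁).trans h₂)
        = comp μ (comp ν ρ h₂) (h₁.trans (r_comp ν ρ h₂).symm)
  factor_exists : ∀ μ (n m : NK k), d μ = n + m →
      ∃ (α β : Mor) (h : s α = r β), d α = n ∧ d β = m ∧ comp α β h = μ
  factor_unique : ∀ (α β α' β' : Mor) (h : s α = r β) (h' : s α' = r β'),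
      d α = d α' → comp α β h = comp α' β' h' → α = α' ∧ β = β'
  row_finite : ∀ (v : Obj) (n : NK k), {μ : Mor | r μ = v ∧ d μ = n}.Finite
  no_sources : ∀ (v : Obj) (n : NK k), ∃ μ : Mor, r μ = v ∧ d μ = n

lemma KGraph.comp_congr {k : ℕ} (Λ : KGraph k) {μ ν ν' : Λ.Mor} (hν : ν = ν')
    (h : Λ.s μ = Λ.r ν) (h' : Λ.s μ = Λ.r ν') : Λ.comp μ ν h = Λ.comp μ ν' h' := by
  cases hν; rfl

/-- An edge: a morphism of degree `e_i` for some `i`. -/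
def IsEdge {k : ℕ} (Λ : KGraph k) (μ : Λ.Mor) : Prop := ∃ i : Fin k, Λ.d μ = Pi.single i 1

/-- Membership in `Λ⁰ ∪ Λᵉ` (a vertex or an edge). -/
def VorE {k : ℕ} (Λ : KGraph k) (μ : Λ.Mor) : Prop := Λ.d μ = 0 ∨ IsEdge Λ μ

/-- A self-similar action of a group `G` on a `k`-graph `Λ`: an action by degree-,
range- and source-preserving automorphisms, together with a restriction map
`(g, μ) ↦ g|_μ` satisfying the Exel–Pardo style axioms. -/
structure SelfSimilar (k : ℕ) (G : Type) [Group G] (Λ : KGraph k) where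
  act : G → Λ.Mor → Λ.Mor
  res : G → Λ.Mor → G
  act_one : ∀ μ, act 1 μ = μ
  act_mul : ∀ g h μ, act (g * h) μ = act g (act h μ)
  act_d : ∀ g μ, Λ.d (act g μ) = Λ.d μ
  act_ofObj_r : ∀ g μ, act g (Λ.ofObj (Λ.r μ)) = Λ.ofObj (Λ.r (act g μ))
  act_ofObj_s : ∀ g μ, act g (Λ.ofObj (Λ.s μ)) = Λ.ofObj (Λ.s (act g μ))
  compat : ∀ g μ ν (h : Λ.s μ = Λ.r ν), Λ.s (act g μ) = Λ.r (act (res g μ) ν)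
  act_comp : ∀ g μ ν (h : Λ.s μ = Λ.r ν),
      act g (Λ.comp μ ν h) = Λ.comp (act g μ) (act (res g μ) ν) (compat g μ ν h)
  res_ofObj : ∀ g v, res g (Λ.ofObj v) = g
  res_comp : ∀ g μ ν (h : Λ.s μ = Λ.r ν), res g (Λ.comp μ ν h) = res (res g μ) ν
  res_one : ∀ μ, res 1 μ = 1
  res_mul : ∀ g h μ, res (g * h) μ = res g (act h μ) * res h μ

variable {k : ℕ} {G : Type} [Group G] {Λ : KGraph k}

/-- The induced action of `G` on the vertices `Λ⁰`. -/
def SelfSimilar.actV (S : SelfSimilar k G Λ) (g : G) (v : Λ.Obj) : Λ.Obj :=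
  Λ.s (S.act g (Λ.ofObj v))

/-- The action is pseudo free. -/
def SelfSimilar.PseudoFree (S : SelfSimilar k G Λ) : Prop :=
  ∀ (g : G) (μ : Λ.Mor), S.act g μ = μ → S.res g μ = 1 → g = 1

/-- An infinite path in `Λ`: a degree-preserving functor `Ω_k → Λ`, recorded through
its segments `x(p,q)` for `p ≤ q`. -/
structure InfPath {k : ℕ} (Λ : KGraph k) where
  seg : ∀ p q : NK k, p ≤ q → Λ.Mor
  d_seg : ∀ p q (h : p ≤ q), Λ.d (seg p q h) = fun i => q i - p i
  src_seg : ∀ p q m (h₁ : p ≤ q) (h₂ : q ≤ m), Λ.s (seg p q h₁) = Λ.r (seg q m h₂)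
  comp_seg : ∀ p q m (h₁ : p ≤ q) (h₂ : q ≤ m),
      Λ.comp (seg p q h₁) (seg q m h₂) (src_seg p q m h₁ h₂) = seg p m (h₁.trans h₂)

lemma InfPath.ext' {x y : InfPath Λ} (h : x.seg = y.seg) : x = y := by
  cases x; cases y; cases h; rfl

/-- The shift `σ^p(x)`. -/
def InfPath.shift (x : InfPath Λ) (p : NK k) : InfPath Λ where
  seg m n h := x.seg (m + p) (n + p) (add_le_add_left h p)
  d_seg m n h := by
    rw [x.d_seg]; funext i; simp only [Pi.add_apply]; omega
  src_seg m n l h₁ h₂ := x.src_seg _ _ _ _ _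
  comp_seg m n l h₁ h₂ := x.comp_seg _ _ _ _ _

/-- The action of `G` on infinite paths: `(g·x)(p,q) = g|_{x(0,p)} · x(p,q)`. -/
def SelfSimilar.actInf (S : SelfSimilar k G Λ) (g : G) (x : InfPath Λ) : InfPath Λ where
  seg p q h := S.act (S.res g (x.seg 0 p (le0 p))) (x.seg p q h)
  d_seg p q h := by rw [S.act_d, x.d_seg]
  src_seg p q m h₁ h₂ := by
    have key : S.res g (x.seg 0 q (le0 q))
        = S.res (S.res g (x.seg 0 p (le0 p))) (x.seg p q h₁) := by
      rw [← S.res_comp g (x.seg 0 p (le0 p)) (x.seg p q h₁) (x.src_seg 0 p q (le0 p) h₁),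
        x.comp_seg 0 p q (le0 p) h₁]
    beta_reduce
    rw [key]
    exact S.compat _ _ _ (x.src_seg p q m h₁ h₂)
  comp_seg p q m h₁ h₂ := by
    have key : S.res g (x.seg 0 q (le0 q))
        = S.res (S.res g (x.seg 0 p (le0 p))) (x.seg p q h₁) := by
      rw [← S.res_comp g (x.seg 0 p (le0 p)) (x.seg p q h₁) (x.src_seg 0 p q (le0 p) h₁),
        x.comp_seg 0 p q (le0 p) h₁]
    beta_reduce
    rw [← x.comp_seg p q m h₁ h₂, S.act_comp]
    exact Λ.comp_congr (by rw [key]) _ _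

/-- The restriction cocycle `g|_x : ℕ^k → G`, `g|_x(p) = g|_{x(0,p)}`. -/
def SelfSimilar.resInf (S : SelfSimilar k G Λ) (g : G) (x : InfPath Λ) : NK k → G :=
  fun p => S.res g (x.seg 0 p (le0 p))

/-- `IsConcat μ x y` says that `y = μx`, the concatenation of the finite path `μ`
(with `x(0,0) = s(μ)`) and the infinite path `x`. -/
def IsConcat (Λ : KGraph k) (μ : Λ.Mor) (x y : InfPath Λ) : Prop :=
  x.seg 0 0 le_rfl = Λ.ofObj (Λ.s μ) ∧
  y.seg 0 (Λ.d μ) (le0 _) = μ ∧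
  ∀ m n (h : m ≤ n), y.seg (Λ.d μ + m) (Λ.d μ + n) (add_le_add_right h _) = x.seg m n h

/-- The cylinder set `Z(μ)`. -/
def cylinder (Λ : KGraph k) (μ : Λ.Mor) : Set (InfPath Λ) :=
  {x : InfPath Λ | x.seg 0 (Λ.d μ) (le0 _) = μ}

/-- The cylinder-set topology on `Λ^∞`. -/
instance instTopInfPath (Λ : KGraph k) : TopologicalSpace (InfPath Λ) :=
  TopologicalSpace.generateFrom {U | ∃ μ : Λ.Mor, U = cylinder Λ μ}

/-- `Λ` is `G`-cofinal. -/
def GCofinal (S : SelfSimilar k G Λ) : Prop :=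
  ∀ (x : InfPath Λ) (v : Λ.Obj), ∃ (p : NK k) (μ : Λ.Mor) (g : G),
    Λ.ofObj (Λ.s μ) = x.seg p p le_rfl ∧ Λ.r μ = S.actV g v

/-- `Λ` is `G`-aperiodic. -/
def GAperiodic (S : SelfSimilar k G Λ) : Prop :=
  ∀ v : Λ.Obj, ∃ x : InfPath Λ, x.seg 0 0 le_rfl = Λ.ofObj v ∧
    ∀ (g : G) (p q : NK k), g ≠ 1 ∨ p ≠ q → x.shift p ≠ S.actInf g (x.shift q)

/-- A subset `U ⊆ Λ^∞` is invariant for the self-similar action. -/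
def InvariantSet (S : SelfSimilar k G Λ) (U : Set (InfPath Λ)) : Prop :=
  ∀ (g : G) (μ ν : Λ.Mor) (x z y : InfPath Λ),
    Λ.s μ = S.actV g (Λ.s ν) → IsConcat Λ ν x z → IsConcat Λ μ (S.actInf g x) y →
    z ∈ U → y ∈ U

/-- The minimal common extensions `Λ^min(μ,ν)`. -/
def Lmin (Λ : KGraph k) (μ ν : Λ.Mor) : Set (Λ.Mor × Λ.Mor) :=
  {p | ∃ (h₁ : Λ.s μ = Λ.r p.1) (h₂ : Λ.s ν = Λ.r p.2),
      Λ.comp μ p.1 h₁ = Λ.comp ν p.2 h₂ ∧ Λ.d (Λ.comp μ p.1 h₁) = Λ.d μ ⊔ Λ.d ν}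

/-- The group `C(ℕ^k, G)` of all functions `ℕ^k → G` under pointwise multiplication. -/
abbrev CkG (k : ℕ) (G : Type) [Group G] := NK k → G

/-- The normal subgroup of eventually trivial functions. -/
def tailTrivial (k : ℕ) (G : Type) [Group G] : Subgroup (CkG k G) where
  carrier := {f | ∃ z : NK k, ∀ p, z ≤ p → f p = 1}
  one_mem' := ⟨0, fun _ _ => rfl⟩
  mul_mem' := by
    rintro f g ⟨z₁, h₁⟩ ⟨z₂, h₂⟩
    exact ⟨z₁ ⊔ z₂, fun p hp => by
      rw [Pi.mul_apply, h₁ p (le_trans le_sup_left hp), h₂ p (le_trans le_sup_right hp),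
        one_mul]⟩
  inv_mem' := by
    rintro f ⟨z, h⟩
    exact ⟨z, fun p hp => by rw [Pi.inv_apply, h p hp, inv_one]⟩

instance tailTrivialNormal (k : ℕ) (G : Type) [Group G] : (tailTrivial k G).Normal := by
  constructor
  rintro f ⟨z, hz⟩ g
  exact ⟨z, fun p hp => by
    simp only [Pi.mul_apply, Pi.inv_apply, hz p hp, mul_one, mul_inv_cancel]⟩

/-- The quotient group `Q(ℕ^k, G) = C(ℕ^k,G)/∼`. -/
abbrev QkG (k : ℕ) (G : Type) [Group G] := CkG k G ⧸ tailTrivial k G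

/-- Coercion `ℕ^k → ℤ^k`. -/
def toZ {k : ℕ} (p : NK k) : ZK k := fun i => (p i : ℤ)

open scoped Classical in
/-- The translation `T_z` on functions `ℕ^k → G`, for `z ∈ ℤ^k`. -/
noncomputable def transFun {k : ℕ} {G : Type} [Group G] (z : ZK k) (f : CkG k G) : CkG k G :=
  fun p => if (∀ i, z i ≤ (p i : ℤ)) then f (fun i => ((p i : ℤ) - z i).toNat) else 1

/-- The ambient space `Λ^∞ × (Q(ℕ^k,G) ⋊ ℤ^k) × Λ^∞` containing the self-similar
path groupoid (as a set). -/
abbrev Triple (k : ℕ) (G : Type) [Group G] (Λ : KGraph k) :=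
  InfPath Λ × (QkG k G × ZK k) × InfPath Λ

/-- The basic set `Z(μ, g, ν)` of the self-similar path groupoid. -/
def Zset (S : SelfSimilar k G Λ) (μ : Λ.Mor) (g : G) (ν : Λ.Mor) : Set (Triple k G Λ) :=
  {t | ∃ x y z : InfPath Λ, IsConcat Λ ν x z ∧ IsConcat Λ μ (S.actInf g x) y ∧
    t = (y, ((QuotientGroup.mk (transFun (toZ (Λ.d μ)) (S.resInf g x)) : QkG k G),
      toZ (Λ.d μ) - toZ (Λ.d ν)), z)}

/-- The family `B_{G,Λ}` of basic sets. -/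
def BGL (S : SelfSimilar k G Λ) : Set (Set (Triple k G Λ)) :=
  {A | ∃ (μ ν : Λ.Mor) (g : G), Λ.s μ = S.actV g (Λ.s ν) ∧ A = Zset S μ g ν}

/-- The self-similar path groupoid `G_{G,Λ}` (as a set of triples). -/
def Gpd (S : SelfSimilar k G Λ) : Set (Triple k G Λ) :=
  {t | ∃ (g : G) (μ ν : Λ.Mor), Λ.s μ = S.actV g (Λ.s ν) ∧ t ∈ Zset S μ g ν}

/-- The topology on `G_{G,Λ}` generated by the basic sets. -/
def gpdTop (S : SelfSimilar k G Λ) : TopologicalSpace {t : Triple k G Λ // t ∈ Gpd S} :=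
  TopologicalSpace.generateFrom
    {A | ∃ (μ ν : Λ.Mor) (g : G), A = {t | (t : Triple k G Λ) ∈ Zset S μ g ν}}


lemma InfPath.seg_congr (x : InfPath Λ) {p p' q q' : NK k} (hp : p = p') (hq : q = q')
    (h : p ≤ q) (h' : p' ≤ q') : x.seg p q h = x.seg p' q' h' := by
  subst hp; subst hq; rfl

lemma InfPath.seg_self (x : InfPath Λ) (q : NK k) :
    x.seg q q le_rfl = Λ.ofObj (Λ.s (x.seg 0 q (le0 q))) := by
  obtain ⟨v, hv⟩ := Λ.eq_ofObj_of_d_eq_zero (x.seg q q le_rfl)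
    (by rw [x.d_seg]; funext i; exact Nat.sub_self _)
  have hr : Λ.r (x.seg q q le_rfl) = Λ.s (x.seg 0 q (le0 q)) :=
    (x.src_seg 0 q q (le0 q) le_rfl).symm
  rw [hv] at hr ⊢
  rw [Λ.r_ofObj] at hr
  rw [hr]

lemma act_ofObj (S : SelfSimilar k G Λ) (g : G) (v : Λ.Obj) :
    S.act g (Λ.ofObj v) = Λ.ofObj (S.actV g v) := by
  obtain ⟨w, hw⟩ := Λ.eq_ofObj_of_d_eq_zero (S.act g (Λ.ofObj v))
    (by rw [S.act_d, Λ.d_ofObj])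
  unfold SelfSimilar.actV
  rw [hw, Λ.s_ofObj]

lemma shift_of_concat {μ : Λ.Mor} {x z : InfPath Λ} (h : IsConcat Λ μ x z) :
    z.shift (Λ.d μ) = x := by
  apply InfPath.ext'
  funext m n hmn
  show z.seg (m + Λ.d μ) (n + Λ.d μ) _ = x.seg m n hmn
  rw [z.seg_congr (add_comm m (Λ.d μ)) (add_comm n (Λ.d μ)) _ (add_le_add_right hmn _),
    h.2.2]

lemma transFun_eval {G : Type} [Group G] (p m : NK k) (f : CkG k G) (h : p ≤ m) :
    transFun (toZ p) f m = f (fun i => m i - p i) := by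
  have hc : ∀ i, toZ p i ≤ (m i : ℤ) := fun i => by
    have := Pi.le_def.mp h i; simp only [toZ]; omega
  simp only [transFun, if_pos hc]
  congr 1
  funext i
  have := Pi.le_def.mp h i
  simp only [toZ]
  omega

/-- the two descriptions of the self-similar path groupoid coincide. -/
theorem stmt18 {k : ℕ} (hk : 0 < k) (G : Type) [Group G] [Countable G]
    (Λ : KGraph k) (S : SelfSimilar k G Λ) :
    {t : Triple k G Λ | ∃ (f : CkG k G) (p q : NK k),
        t.2.1.1 = (QuotientGroup.mk f : QkG k G) ∧
        t.2.1.2 = toZ p - toZ q ∧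
        t.1.shift p = S.actInf (f p) (t.2.2.shift q) ∧
        ∀ n : NK k, f (p + n) = S.res (f p) ((t.2.2.shift q).seg 0 n (le0 n))} =
      Gpd S := by
  ext t
  obtain ⟨y, ⟨Q, w⟩, z⟩ := t
  simp only [Set.mem_setOf_eq]
  constructor
  · rintro ⟨f, p, q, hQ, hw, hshift, hres⟩
    set g := f p with hg
    set x := z.shift q with hxdef
    set μ := y.seg 0 p (le0 p) with hμ
    set ν := z.seg 0 q (le0 q) with hν
    have hdμ : Λ.d μ = p := by rw [hμ, y.d_seg]; funext i; show p i - 0 = p i; omega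
    have hdν : Λ.d ν = q := by rw [hν, z.d_seg]; funext i; show q i - 0 = q i; omega
    have hx00 : x.seg 0 0 le_rfl = Λ.ofObj (Λ.s ν) := by
      show z.seg (0 + q) (0 + q) _ = _
      rw [z.seg_congr (zero_add q) (zero_add q) _ le_rfl, z.seg_self q]
    have hyp : ∀ m n (h : m ≤ n),
        y.seg (m + p) (n + p) (add_le_add_left h p) = (S.actInf g x).seg m n h :=
      fun m n h => congrArg (fun w : InfPath Λ => w.seg m n h) hshift
    have h1 : y.seg p p le_rfl = (S.actInf g x).seg 0 0 le_rfl := by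
      rw [← hyp 0 0 le_rfl]
      exact y.seg_congr (zero_add p).symm (zero_add p).symm _ _
    have key : y.seg p p le_rfl = Λ.ofObj (S.actV g (Λ.s ν)) := by
      rw [h1]
      show S.act (S.res g (x.seg 0 0 (le0 0))) (x.seg 0 0 le_rfl) = _
      rw [show x.seg 0 0 (le0 0) = Λ.ofObj (Λ.s ν) from hx00, S.res_ofObj,
        act_ofObj]
    have hsμ : Λ.s μ = S.actV g (Λ.s ν) := by
      rw [hμ, y.src_seg 0 p p (le0 p) le_rfl]
      show Λ.r (y.seg p p le_rfl) = _
      rw [key, Λ.r_ofObj]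
    refine ⟨g, μ, ν, hsμ, x, y, z, ⟨hx00, ?_, ?_⟩, ⟨?_, ?_, ?_⟩, ?_⟩
    · exact z.seg_congr rfl hdν _ _
    · intro m n h
      show z.seg _ _ _ = z.seg (m + q) (n + q) (add_le_add_left h q)
      exact z.seg_congr (by rw [hdν, add_comm]) (by rw [hdν, add_comm]) _ _
    · rw [← h1, key, hsμ]
    · exact y.seg_congr rfl hdμ _ _
    · intro m n h
      rw [y.seg_congr (show Λ.d μ + m = m + p by rw [hdμ, add_comm])
        (show Λ.d μ + n = n + p by rw [hdμ, add_comm]) _ (add_le_add_left h p)]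
      exact hyp m n h
    · rw [hdμ, hdν]
      refine Prod.ext rfl (Prod.ext (Prod.ext ?_ hw) rfl)
      show Q = _
      rw [hQ]
      rw [QuotientGroup.eq]
      refine ⟨p, fun m hm => ?_⟩
      have hcomp : S.resInf g x (fun i => m i - p i) = f m := by
        have h1' := hres (fun i => m i - p i)
        have h2 : p + (fun i => m i - p i) = m := funext fun i => by
          have := Pi.le_def.mp hm i; show p i + (m i - p i) = m i; omega
        rw [h2] at h1'
        exact h1'.symm
      simp only [Pi.mul_apply, Pi.inv_apply]
      rw [transFun_eval p m _ hm, hcomp]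
      exact inv_mul_cancel _
  · rintro ⟨g, μ, ν, hsμ, x, yy, zz, hz, hy, ht⟩
    simp only [Prod.mk.injEq] at ht
    obtain ⟨hy1, ⟨hQ, hw⟩, hz1⟩ := ht
    subst hy1; subst hz1
    have hsy := shift_of_concat hy
    have hsz := shift_of_concat hz
    refine ⟨transFun (toZ (Λ.d μ)) (S.resInf g x), Λ.d μ, Λ.d ν, hQ, hw, ?_, ?_⟩
    · have hfp : transFun (toZ (Λ.d μ)) (S.resInf g x) (Λ.d μ) = g := by
        rw [transFun_eval _ _ _ le_rfl,
          show (fun i => Λ.d μ i - Λ.d μ i) = (0 : NK k) from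
            funext fun i => Nat.sub_self _]
        show S.res g (x.seg 0 0 (le0 0)) = g
        rw [show x.seg 0 0 (le0 0) = Λ.ofObj (Λ.s ν) from hz.1, S.res_ofObj]
      rw [hfp, hsz, hsy]
    · intro n
      have hseg : (z.shift (Λ.d ν)).seg 0 n (le0 n) = x.seg 0 n (le0 n) := by
        rw [hsz]
      have hle : Λ.d μ ≤ Λ.d μ + n := fun i => Nat.le_add_right _ _
      rw [transFun_eval _ _ _ hle,
        show (fun i => (Λ.d μ + n) i - Λ.d μ i) = n from funext fun i => by
          show Λ.d μ i + n i - Λ.d μ i = n i; omega,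
        transFun_eval _ _ _ le_rfl,
        show (fun i => Λ.d μ i - Λ.d μ i) = (0 : NK k) from
          funext fun i => Nat.sub_self _,
        hseg]
      show S.res g (x.seg 0 n (le0 n)) = S.res (S.res g (x.seg 0 0 (le0 0))) _
      rw [show x.seg 0 0 (le0 0) = Λ.ofObj (Λ.s ν) from hz.1, S.res_ofObj]

end SSKG
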